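/- Let Φ denote the standard Gaussian cumulative distribution function. Then for every real x ≥ 0, Φ(−x)/Φ(x) ≤ e^{−x}; equivalently, Φ(−x) ≤ e^{−x}·Φ(x). -/

import Mathlib

open Set MeasureTheory Real Filter

/-- The standard Gaussian CDF Φ(x) = (2π)^{−1/2} ∫_{−∞}^x e^{−t²/2} dt. -/
noncomputable def stdGaussCDF (x : ℝ) : ℝ :=
  ∫ t in Set.Iic x, (Real.sqrt (2 * Real.pi))⁻¹ * Real.exp (-t ^ 2 / 2)

noncomputable def gpdf (t : ℝ) : ℝ := (Real.sqrt (2 * Real.pi))⁻¹ * Real.exp (-t ^ 2 / 2)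

lemma sqrt_two_pi_pos : 0 < Real.sqrt (2 * Real.pi) :=
  Real.sqrt_pos.mpr (by positivity)

lemma gpdf_pos (t : ℝ) : 0 < gpdf t := by
  unfold gpdf; positivity

lemma gpdf_neg (t : ℝ) : gpdf (-t) = gpdf t := by
  simp [gpdf, neg_sq]

lemma continuous_gpdf : Continuous gpdf := by
  unfold gpdf; fun_prop

lemma integrable_gpdf : Integrable gpdf := by
  have h := (integrable_exp_neg_mul_sq (by norm_num : (0:ℝ) < 1/2)).const_mul
    (Real.sqrt (2 * Real.pi))⁻¹
  refine h.congr (Eventually.of_forall fun t => ?_)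
  unfold gpdf; ring_nf

lemma stdGaussCDF_def (x : ℝ) : stdGaussCDF x = ∫ t in Set.Iic x, gpdf t := rfl

lemma stdGaussCDF_eq (x : ℝ) :
    stdGaussCDF x = stdGaussCDF 0 + ∫ t in (0:ℝ)..x, gpdf t := by
  rw [stdGaussCDF_def, stdGaussCDF_def,
    ← intervalIntegral.integral_Iic_sub_Iic integrable_gpdf.integrableOn
      integrable_gpdf.integrableOn]
  ring

lemma hasDerivAt_stdGaussCDF (x : ℝ) : HasDerivAt stdGaussCDF (gpdf x) x := by
  have H : HasDerivAt (fun u => stdGaussCDF 0 + ∫ t in (0:ℝ)..u, gpdf t) (gpdf x) x := by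
    exact (intervalIntegral.integral_hasDerivAt_right
      (integrable_gpdf.intervalIntegrable)
      (continuous_gpdf.stronglyMeasurable.stronglyMeasurableAtFilter)
      continuous_gpdf.continuousAt).const_add _
  have : stdGaussCDF = fun u => stdGaussCDF 0 + ∫ t in (0:ℝ)..u, gpdf t :=
    funext stdGaussCDF_eq
  rw [this]; exact H

lemma stdGaussCDF_zero : stdGaussCDF 0 = 1 / 2 := by
  have hint : (∫ t : ℝ, Real.exp (-t ^ 2 / 2)) = Real.sqrt (2 * Real.pi) := by
    have := integral_gaussian (1/2)
    rw [show Real.pi / (1/2) = 2 * Real.pi by ring] at this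
    rw [← this]
    congr 1 with t
    ring_nf
  have hexp : Integrable fun t : ℝ => Real.exp (-t ^ 2 / 2) := by
    have h := integrable_exp_neg_mul_sq (by norm_num : (0:ℝ) < 1/2)
    refine h.congr (Eventually.of_forall fun t => ?_); ring_nf
  have hsymm : (∫ t in Set.Ioi (0:ℝ), Real.exp (-t ^ 2 / 2))
      = ∫ t in Set.Iic (0:ℝ), Real.exp (-t ^ 2 / 2) := by
    rw [← neg_zero, ← integral_comp_neg_Ioi]
    simp [neg_sq]
  have hsplit := intervalIntegral.integral_Iic_add_Ioi (b := (0:ℝ))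
    hexp.integrableOn hexp.integrableOn
  have h0 : (∫ t in Set.Iic (0:ℝ), Real.exp (-t ^ 2 / 2)) = Real.sqrt (2 * Real.pi) / 2 := by
    rw [hint, hsymm] at hsplit; linarith
  rw [stdGaussCDF_def]
  unfold gpdf
  rw [MeasureTheory.integral_const_mul, h0]
  field_simp

lemma integral_Iic_comp_add (f : ℝ → ℝ) (a c : ℝ) :
    (∫ s in Set.Iic c, f (s + a)) = ∫ t in Set.Iic (c + a), f t := by
  have A : MeasurableEmbedding (fun s : ℝ => s + a) :=
    (Homeomorph.addRight a).isClosedEmbedding.measurableEmbedding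
  have hmap : Measure.map (fun s : ℝ => s + a) volume = volume :=
    map_add_right_eq_self volume a
  have := A.setIntegral_map (μ := volume) f (Set.Iic (c + a))
  rw [hmap] at this
  rw [show Set.Iic c = (fun s : ℝ => s + a) ⁻¹' Set.Iic (c + a) from by
    ext s; simp]
  exact this.symm

/-- Tail bound: Φ(−x) ≤ e^{−x²/2}/2 for x ≥ 0. -/
lemma tail_le_half (x : ℝ) (hx : 0 ≤ x) :
    stdGaussCDF (-x) ≤ Real.exp (-x ^ 2 / 2) / 2 := by
  have hshift : Integrable fun t : ℝ => gpdf (t + x) := by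
    have := integrable_gpdf.comp_add_right x
    exact this
  have step1 : stdGaussCDF (-x)
      ≤ ∫ t in Set.Iic (-x), Real.exp (-x ^ 2 / 2) * gpdf (t + x) := by
    rw [stdGaussCDF_def]
    refine setIntegral_mono_on integrable_gpdf.integrableOn
      ((hshift.const_mul _).integrableOn) measurableSet_Iic fun t ht => ?_
    simp only [Set.mem_Iic] at ht
    unfold gpdf
    rw [mul_comm (Real.exp (-x ^ 2 / 2)), mul_assoc, ← Real.exp_add]
    refine mul_le_mul_of_nonneg_left (Real.exp_le_exp.mpr ?_) (by positivity)
    nlinarith [sq_nonneg (t + x)]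
  have step2 : (∫ t in Set.Iic (-x), Real.exp (-x ^ 2 / 2) * gpdf (t + x))
      = Real.exp (-x ^ 2 / 2) * (1 / 2) := by
    rw [MeasureTheory.integral_const_mul, integral_Iic_comp_add gpdf x (-x)]
    rw [show -x + x = 0 by ring, ← stdGaussCDF_def, stdGaussCDF_zero]
  rw [step2] at step1
  linarith [step1]

set_option maxHeartbeats 1000000 in
/-- Tail bound: Φ(−x) ≤ φ(x) for x ≥ 1. -/
lemma tail_le_pdf (x : ℝ) (hx : 1 ≤ x) : stdGaussCDF (-x) ≤ gpdf x := by
  have hint : Integrable fun t : ℝ => -t * gpdf t := by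
    have h := ((integrable_mul_exp_neg_mul_sq (by norm_num : (0:ℝ) < 1/2)).const_mul
      (Real.sqrt (2 * Real.pi))⁻¹).neg
    refine h.congr (Eventually.of_forall fun t => ?_)
    simp only [Pi.neg_apply]
    unfold gpdf; ring_nf
  have hderiv : ∀ t : ℝ, HasDerivAt gpdf (-t * gpdf t) t := by
    intro t
    have h1 : HasDerivAt (fun t : ℝ => -t ^ 2 / 2) (-t) t := by
      have := ((hasDerivAt_pow 2 t).neg.div_const 2)
      exact this.congr_deriv (by norm_num; ring)
    have h2 := (h1.exp).const_mul (Real.sqrt (2 * Real.pi))⁻¹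
    exact h2.congr_deriv (by unfold gpdf; ring)
  have htendsto : Tendsto gpdf atBot (nhds 0) := by
    have h1 : Tendsto (fun t : ℝ => -t ^ 2 / 2) atBot atBot := by
      have hsq : Tendsto (fun t : ℝ => t ^ 2) atBot atTop := by
        have h := (tendsto_pow_atTop (two_ne_zero)).comp
          (tendsto_neg_atBot_atTop : Tendsto (Neg.neg : ℝ → ℝ) atBot atTop)
        refine h.congr fun t => ?_
        simp [Function.comp, neg_sq]
      have h2 := (tendsto_neg_atTop_atBot : Tendsto (Neg.neg : ℝ → ℝ) atTop atBot).comp hsq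
      exact Tendsto.atBot_div_const (by norm_num) (h2.congr fun t => rfl)
    have := Real.tendsto_exp_atBot.comp h1
    have h2 : Tendsto (fun t : ℝ => Real.exp (-t ^ 2 / 2)) atBot (nhds 0) := this
    have h3 := h2.const_mul (Real.sqrt (2 * Real.pi))⁻¹
    rw [mul_zero] at h3
    unfold gpdf
    exact h3
  have hFTC : (∫ t in Set.Iic (-x), -t * gpdf t) = gpdf (-x) := by
    have := MeasureTheory.integral_Iic_of_hasDerivAt_of_tendsto'
      (a := -x) (f := gpdf) (f' := fun t => -t * gpdf t)
      (fun t _ => hderiv t) hint.integrableOn htendsto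
    rw [this, sub_zero]
  have step1 : stdGaussCDF (-x) ≤ ∫ t in Set.Iic (-x), -t * gpdf t := by
    rw [stdGaussCDF_def]
    refine setIntegral_mono_on integrable_gpdf.integrableOn hint.integrableOn
      measurableSet_Iic fun t ht => ?_
    simp only [Set.mem_Iic] at ht
    nlinarith [gpdf_pos t]
  rw [hFTC, gpdf_neg] at step1
  exact step1

lemma sqrt_two_pi_le : Real.sqrt (2 * Real.pi) ≤ 2.51 := by
  rw [show (2.51:ℝ) = Real.sqrt (2.51 ^ 2) by rw [Real.sqrt_sq (by norm_num)]]
  exact Real.sqrt_le_sqrt (by nlinarith [Real.pi_lt_d2])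

/-- Key derivative inequality: eʸΦ(−y) ≤ (eʸ+1)φ(y) for y ≥ 0. -/
lemma key_ineq (y : ℝ) (hy : 0 ≤ y) :
    Real.exp y * stdGaussCDF (-y) ≤ (Real.exp y + 1) * gpdf y := by
  rcases le_total y 1 with h | h
  · have h1 : Real.exp y * stdGaussCDF (-y) ≤ Real.exp y * (Real.exp (-y ^ 2 / 2) / 2) :=
      mul_le_mul_of_nonneg_left (tail_le_half y hy) (Real.exp_pos y).le
    refine h1.trans ?_
    unfold gpdf
    have hey : Real.exp y ≤ 2.7182818286 := by
      calc Real.exp y ≤ Real.exp 1 := Real.exp_le_exp.mpr h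
        _ ≤ 2.7182818286 := Real.exp_one_lt_d9.le
    have hcinv : (2.51:ℝ)⁻¹ ≤ (Real.sqrt (2 * Real.pi))⁻¹ := by
      apply inv_anti₀ sqrt_two_pi_pos sqrt_two_pi_le
    have hkey : Real.exp y / 2 ≤ (Real.exp y + 1) * (Real.sqrt (2 * Real.pi))⁻¹ := by
      have h2 : (Real.exp y + 1) * (2.51:ℝ)⁻¹ ≤ (Real.exp y + 1) * (Real.sqrt (2 * Real.pi))⁻¹ :=
        mul_le_mul_of_nonneg_left hcinv (by positivity)
      refine le_trans ?_ h2
      rw [div_le_iff₀ (by norm_num : (0:ℝ) < 2)] at *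
      nlinarith [Real.exp_pos y]
    calc Real.exp y * (Real.exp (-y ^ 2 / 2) / 2)
        = Real.exp y / 2 * Real.exp (-y ^ 2 / 2) := by ring
      _ ≤ (Real.exp y + 1) * (Real.sqrt (2 * Real.pi))⁻¹ * Real.exp (-y ^ 2 / 2) :=
          mul_le_mul_of_nonneg_right hkey (Real.exp_pos _).le
      _ = (Real.exp y + 1) * ((Real.sqrt (2 * Real.pi))⁻¹ * Real.exp (-y ^ 2 / 2)) := by ring
  · have h1 : Real.exp y * stdGaussCDF (-y) ≤ Real.exp y * gpdf y :=
      mul_le_mul_of_nonneg_left (tail_le_pdf y h) (Real.exp_pos y).le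
    refine h1.trans ?_
    have := gpdf_pos y
    nlinarith

lemma hasDerivAt_g (y : ℝ) :
    HasDerivAt (fun y => Real.exp y * stdGaussCDF (-y) - stdGaussCDF y)
      (Real.exp y * stdGaussCDF (-y) - Real.exp y * gpdf y - gpdf y) y := by
  have hcomp : HasDerivAt (fun y : ℝ => stdGaussCDF (-y)) (-gpdf y) y := by
    have := (hasDerivAt_stdGaussCDF (-y)).comp y (hasDerivAt_neg y)
    rw [gpdf_neg] at this
    exact this.congr_deriv (by ring)
  have := ((Real.hasDerivAt_exp y).mul hcomp).sub (hasDerivAt_stdGaussCDF y)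
  exact this.congr_deriv (by ring)

/-- for all x ≥ 0, Φ(−x) ≤ e^{−x}·Φ(x). -/
theorem stmt_13 (x : ℝ) (hx : 0 ≤ x) :
    stdGaussCDF (-x) ≤ Real.exp (-x) * stdGaussCDF x := by
  set g : ℝ → ℝ := fun y => Real.exp y * stdGaussCDF (-y) - stdGaussCDF y with hg
  have hanti : AntitoneOn g (Set.Ici 0) := by
    apply antitoneOn_of_deriv_nonpos (convex_Ici 0)
    · exact fun y _ => ((hasDerivAt_g y).differentiableAt).continuousAt.continuousWithinAt
    · exact fun y _ => ((hasDerivAt_g y).differentiableAt).differentiableWithinAt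
    · intro y hy
      rw [interior_Ici] at hy
      rw [(hasDerivAt_g y).deriv]
      have := key_ineq y (le_of_lt hy)
      nlinarith
  have hg0 : g 0 = 0 := by simp [hg]
  have hgx : g x ≤ 0 := by
    have := hanti (Set.self_mem_Ici) (Set.mem_Ici.mpr hx) hx
    rwa [hg0] at this
  have hmain : Real.exp x * stdGaussCDF (-x) ≤ stdGaussCDF x := by
    simp only [hg] at hgx; linarith
  have := mul_le_mul_of_nonneg_left hmain (Real.exp_pos (-x)).le
  rwa [← mul_assoc, ← Real.exp_add, neg_add_cancel, Real.exp_zero, one_mul] at this
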